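/- Let n ≥ 1 and let s be an integer with −⌊(n−1)/2⌋ ≤ s ≤ n−1. Then H_s(n) = Σ_{k = max(0, −s)}^{⌊(n−s−1)/3⌋} C(2k+s, k) · C(n−s−1−2k, k), where C denotes the binomial coefficient. -/

import Mathlib

/-- The score of a binary sequence `x` of length `n` (indices `0,…,n-1`, with `true` = heads = 1
and `false` = tails = 0): the number of consecutive pairs `(1,1)` minus the number of
consecutive pairs `(1,0)`. -/
def scoreSeq (n : ℕ) (x : Fin n → Bool) : ℤ :=
  ((Finset.univ.filter fun i : Fin (n - 1) =>
      x ⟨i.val, by have := i.isLt; omega⟩ = true ∧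
      x ⟨i.val + 1, by have := i.isLt; omega⟩ = true).card : ℤ) -
  ((Finset.univ.filter fun i : Fin (n - 1) =>
      x ⟨i.val, by have := i.isLt; omega⟩ = true ∧
      x ⟨i.val + 1, by have := i.isLt; omega⟩ = false).card : ℤ)

/-- `Hcnt n s` : the number of binary `n`-sequences ending in 1 (heads) with score `s`. -/
def Hcnt (n : ℕ) (s : ℤ) : ℕ :=
  (Finset.univ.filter fun x : Fin n → Bool =>
    (∀ i : Fin n, (i : ℕ) = n - 1 → x i = true) ∧ scoreSeq n x = s).card

/-! ### Auxiliary definitions -/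

/-- Number of binary `n`-sequences ending in 0 (tails) with score `s`. -/
def Tcnt (n : ℕ) (s : ℤ) : ℕ :=
  (Finset.univ.filter fun x : Fin n → Bool =>
    (∀ i : Fin n, (i : ℕ) = n - 1 → x i = false) ∧ scoreSeq n x = s).card

/-- The claimed closed formula for `Hcnt`. -/
def Fn (n : ℕ) (s : ℤ) : ℕ :=
  ∑ k ∈ Finset.Icc ((-s).toNat) (((n : ℤ) - s - 1).toNat / 3),
    Nat.choose (2 * (k : ℤ) + s).toNat k *
      Nat.choose (((n : ℤ) - s - 1).toNat - 2 * k) k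

/-- The closed formula for `Tcnt`. -/
def Gn (n : ℕ) (s : ℤ) : ℕ :=
  (if s = 0 then 1 else 0) +
  ∑ m ∈ Finset.Icc (max (-s).toNat 1) (((n : ℤ) - s).toNat / 3),
    Nat.choose (s + 2 * (m : ℤ) - 1).toNat (m - 1) *
      Nat.choose (((n : ℤ) - s).toNat - 2 * m) m

/-! ### Score lemmas -/

lemma score_eq_sum (n : ℕ) (x : Fin n → Bool) :
    scoreSeq n x = ∑ i : Fin (n-1),
      (if x ⟨i.val, by have := i.isLt; omega⟩ = true
        then (if x ⟨i.val+1, by have := i.isLt; omega⟩ = true then (1:ℤ) else -1) else 0) := by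
  unfold scoreSeq
  rw [Finset.card_filter, Finset.card_filter]
  push_cast
  rw [← Finset.sum_sub_distrib]
  refine Finset.sum_congr rfl fun i _ => ?_
  cases h1 : x ⟨i.val, by have := i.isLt; omega⟩ <;>
    cases h2 : x ⟨i.val+1, by have := i.isLt; omega⟩ <;> simp [h1, h2]

lemma score_eq_sum' (m : ℕ) (x : Fin (m+1) → Bool) :
    scoreSeq (m+1) x = ∑ i : Fin m,
      (if x ⟨i.val, by have := i.isLt; omega⟩ = true
        then (if x ⟨i.val+1, by have := i.isLt; omega⟩ = true then (1:ℤ) else -1) else 0) := by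
  rw [score_eq_sum]
  exact Finset.sum_congr rfl fun i _ => rfl

lemma snoc_lt (m : ℕ) (y : Fin (m+1) → Bool) (b : Bool) (j : ℕ) (h : j < m + 1) (h2 : j < m + 2) :
    (Fin.snoc y b : Fin (m+2) → Bool) ⟨j, h2⟩ = y ⟨j, h⟩ := by
  have e : (⟨j, h2⟩ : Fin (m+2)) = Fin.castSucc ⟨j, h⟩ := rfl
  rw [e, Fin.snoc_castSucc]

lemma snoc_last' (m : ℕ) (y : Fin (m+1) → Bool) (b : Bool) (h2 : m+1 < m+2) :
    (Fin.snoc y b : Fin (m+2) → Bool) ⟨m+1, h2⟩ = b := by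
  have e : (⟨m+1, h2⟩ : Fin (m+2)) = Fin.last (m+1) := rfl
  rw [e, Fin.snoc_last]

lemma score_snoc (m : ℕ) (y : Fin (m+1) → Bool) (b : Bool) :
    scoreSeq (m+2) (Fin.snoc y b) = scoreSeq (m+1) y
      + (if y (Fin.last m) = true then (if b = true then (1:ℤ) else -1) else 0) := by
  rw [score_eq_sum' (m+1), score_eq_sum' m]
  rw [Fin.sum_univ_castSucc (n := m)]
  congr 1
  · refine Finset.sum_congr rfl fun i _ => ?_
    simp only [Fin.coe_castSucc]
    simp only [snoc_lt m y b i.val (by omega) (by omega),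
        snoc_lt m y b (i.val+1) (by omega) (by omega)]
  · simp only [Fin.val_last]
    simp only [snoc_lt m y b m (by omega) (by omega), snoc_last']
    rfl

lemma score_one (x : Fin 1 → Bool) : scoreSeq 1 x = 0 := by
  rw [score_eq_sum' 0]
  simp

lemma score_le (m : ℕ) (x : Fin (m+1) → Bool) : scoreSeq (m+1) x ≤ (m : ℤ) := by
  rw [score_eq_sum' m]
  calc (∑ i : Fin m, (if x ⟨i.val, by have := i.isLt; omega⟩ = true
        then (if x ⟨i.val+1, by have := i.isLt; omega⟩ = true then (1:ℤ) else -1) else 0))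
      ≤ ∑ _i : Fin m, (1:ℤ) := by
        apply Finset.sum_le_sum
        intro i _
        split_ifs <;> norm_num
    _ = m := by simp

/-! ### Counting recurrences -/

lemma forall_last_iff (n : ℕ) (x : Fin (n+1) → Bool) (c : Bool) :
    (∀ i : Fin (n+1), (i : ℕ) = (n+1) - 1 → x i = c) ↔ x (Fin.last n) = c := by
  constructor
  · intro h; exact h (Fin.last n) rfl
  · intro h i hi
    have : i = Fin.last n := Fin.ext (by simpa using hi)
    rwa [this]

lemma Hcnt_succ (m : ℕ) (s : ℤ) :
    Hcnt (m+2) s = Hcnt (m+1) (s-1) + Tcnt (m+1) s := by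
  unfold Hcnt Tcnt
  rw [← Finset.card_union_of_disjoint (by
    rw [Finset.disjoint_left]
    intro y hy1 hy2
    simp only [Finset.mem_filter] at hy1 hy2
    have h1 := (forall_last_iff m y true).1 hy1.2.1
    have h2 := (forall_last_iff m y false).1 hy2.2.1
    simp [h1] at h2)]
  apply Finset.card_nbij' (i := fun x => Fin.init x) (j := fun y => Fin.snoc y true)
  · intro x hx
    simp only [Finset.mem_coe, Finset.mem_filter, Finset.mem_univ, true_and] at hx ⊢
    obtain ⟨hlast, hsc⟩ := hx
    have hlast' : x (Fin.last (m+1)) = true := (forall_last_iff (m+1) x true).1 hlast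
    have hx' : Fin.snoc (Fin.init x) (x (Fin.last (m+1))) = x := Fin.snoc_init_self x
    rw [hlast'] at hx'
    rw [← hx', score_snoc] at hsc
    rw [Finset.mem_union]
    simp only [Finset.mem_filter, Finset.mem_univ, true_and]
    cases hl : Fin.init x (Fin.last m) with
    | true =>
      left
      refine ⟨(forall_last_iff m _ true).2 hl, ?_⟩
      rw [hl] at hsc; simp at hsc; omega
    | false =>
      right
      refine ⟨(forall_last_iff m _ false).2 hl, ?_⟩
      rw [hl] at hsc; simp at hsc; omega
  · intro y hy
    rw [Finset.mem_coe, Finset.mem_union] at hy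
    simp only [Finset.mem_coe, Finset.mem_filter, Finset.mem_univ, true_and] at hy ⊢
    constructor
    · apply (forall_last_iff (m+1) _ true).2
      exact Fin.snoc_last _ _
    · rw [score_snoc]
      rcases hy with ⟨hl, hsc⟩ | ⟨hl, hsc⟩
      · have := (forall_last_iff m y true).1 hl
        rw [this, hsc]; simp
      · have := (forall_last_iff m y false).1 hl
        rw [this, hsc]; simp
  · intro x hx
    simp only [Finset.mem_coe, Finset.mem_filter, Finset.mem_univ, true_and] at hx
    have hlast' : x (Fin.last (m+1)) = true := (forall_last_iff (m+1) x true).1 hx.1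
    conv_rhs => rw [← Fin.snoc_init_self x]
    rw [hlast']
  · intro y _
    exact Fin.init_snoc _ _

lemma Tcnt_succ (m : ℕ) (s : ℤ) :
    Tcnt (m+2) s = Hcnt (m+1) (s+1) + Tcnt (m+1) s := by
  unfold Hcnt Tcnt
  rw [← Finset.card_union_of_disjoint (by
    rw [Finset.disjoint_left]
    intro y hy1 hy2
    simp only [Finset.mem_filter] at hy1 hy2
    have h1 := (forall_last_iff m y true).1 hy1.2.1
    have h2 := (forall_last_iff m y false).1 hy2.2.1
    simp [h1] at h2)]
  apply Finset.card_nbij' (i := fun x => Fin.init x) (j := fun y => Fin.snoc y false)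
  · intro x hx
    simp only [Finset.mem_coe, Finset.mem_filter, Finset.mem_univ, true_and] at hx ⊢
    obtain ⟨hlast, hsc⟩ := hx
    have hlast' : x (Fin.last (m+1)) = false := (forall_last_iff (m+1) x false).1 hlast
    have hx' : Fin.snoc (Fin.init x) (x (Fin.last (m+1))) = x := Fin.snoc_init_self x
    rw [hlast'] at hx'
    rw [← hx', score_snoc] at hsc
    rw [Finset.mem_union]
    simp only [Finset.mem_filter, Finset.mem_univ, true_and]
    cases hl : Fin.init x (Fin.last m) with
    | true =>
      left
      refine ⟨(forall_last_iff m _ true).2 hl, ?_⟩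
      rw [hl] at hsc; simp at hsc; omega
    | false =>
      right
      refine ⟨(forall_last_iff m _ false).2 hl, ?_⟩
      rw [hl] at hsc; simp at hsc; omega
  · intro y hy
    rw [Finset.mem_coe, Finset.mem_union] at hy
    simp only [Finset.mem_coe, Finset.mem_filter, Finset.mem_univ, true_and] at hy ⊢
    constructor
    · apply (forall_last_iff (m+1) _ false).2
      exact Fin.snoc_last _ _
    · rw [score_snoc]
      rcases hy with ⟨hl, hsc⟩ | ⟨hl, hsc⟩
      · have := (forall_last_iff m y true).1 hl
        rw [this, hsc]; simp
      · have := (forall_last_iff m y false).1 hl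
        rw [this, hsc]; simp
  · intro x hx
    simp only [Finset.mem_coe, Finset.mem_filter, Finset.mem_univ, true_and] at hx
    have hlast' : x (Fin.last (m+1)) = false := (forall_last_iff (m+1) x false).1 hx.1
    conv_rhs => rw [← Fin.snoc_init_self x]
    rw [hlast']
  · intro y _
    exact Fin.init_snoc _ _

lemma Hcnt_zero (m : ℕ) (s : ℤ) (h : (m:ℤ) < s) : Hcnt (m+1) s = 0 := by
  unfold Hcnt
  rw [Finset.card_eq_zero, Finset.filter_eq_empty_iff]
  intro x _
  rintro ⟨-, hsc⟩
  have := score_le m x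
  omega

lemma Hcnt_one (s : ℤ) : Hcnt 1 s = if s = 0 then 1 else 0 := by
  unfold Hcnt
  split_ifs with h
  · subst h
    rw [Finset.card_eq_one]
    refine ⟨fun _ => true, ?_⟩
    ext x
    simp only [Finset.mem_filter, Finset.mem_univ, true_and, Finset.mem_singleton]
    constructor
    · rintro ⟨h1, -⟩
      funext i
      exact h1 i (by omega)
    · rintro rfl
      exact ⟨fun _ _ => rfl, score_one _⟩
  · rw [Finset.card_eq_zero, Finset.filter_eq_empty_iff]
    intro x _
    rintro ⟨-, hsc⟩
    rw [score_one] at hsc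
    exact h hsc.symm

lemma Tcnt_one (s : ℤ) : Tcnt 1 s = if s = 0 then 1 else 0 := by
  unfold Tcnt
  split_ifs with h
  · subst h
    rw [Finset.card_eq_one]
    refine ⟨fun _ => false, ?_⟩
    ext x
    simp only [Finset.mem_filter, Finset.mem_univ, true_and, Finset.mem_singleton]
    constructor
    · rintro ⟨h1, -⟩
      funext i
      exact h1 i (by omega)
    · rintro rfl
      exact ⟨fun _ _ => rfl, score_one _⟩
  · rw [Finset.card_eq_zero, Finset.filter_eq_empty_iff]
    intro x _
    rintro ⟨-, hsc⟩
    rw [score_one] at hsc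
    exact h hsc.symm

/-! ### Binomial identities -/

lemma pascal_mul (t k Z : ℕ) (ht : 1 ≤ t) (hk : 1 ≤ k) :
    t.choose k * Z = (t-1).choose k * Z + (t-1).choose (k-1) * Z := by
  obtain ⟨t', rfl⟩ : ∃ t', t = t'+1 := ⟨t-1, by omega⟩
  obtain ⟨k', rfl⟩ : ∃ k', k = k'+1 := ⟨k-1, by omega⟩
  simp only [Nat.add_sub_cancel, Nat.choose_succ_succ]
  ring

lemma icc_insert (a U : ℕ) (h : a ≤ U) :
    Finset.Icc a U = insert a (Finset.Icc (a+1) U) := by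
  ext z
  simp only [Finset.mem_Icc, Finset.mem_insert]
  omega

lemma lemA (c N : ℕ) :
    ∑ k ∈ Finset.Icc 0 (N/3), Nat.choose (2*k+c) k * Nat.choose (N-2*k) k
    = ∑ k ∈ Finset.Icc 0 (N/3), Nat.choose (2*k+c-1) k * Nat.choose (N-2*k) k
      + ∑ m ∈ Finset.Icc 1 (N/3), Nat.choose (2*m+c-1) (m-1) * Nat.choose (N-2*m) m := by
  rw [icc_insert 0 (N/3) (by omega), Finset.sum_insert (by simp),
      Finset.sum_insert (by simp)]
  have hcore : ∑ k ∈ Finset.Icc 1 (N/3), Nat.choose (2*k+c) k * Nat.choose (N-2*k) k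
      = ∑ k ∈ Finset.Icc 1 (N/3), Nat.choose (2*k+c-1) k * Nat.choose (N-2*k) k
        + ∑ m ∈ Finset.Icc 1 (N/3), Nat.choose (2*m+c-1) (m-1) * Nat.choose (N-2*m) m := by
    rw [← Finset.sum_add_distrib]
    refine Finset.sum_congr rfl fun k hk => ?_
    rw [Finset.mem_Icc] at hk
    exact pascal_mul _ _ _ (by omega) (by omega)
  rw [hcore]
  simp [Nat.choose_zero_right]
  ring

lemma lemB (a N : ℕ) (ha : 1 ≤ a) :
    ∑ k ∈ Finset.Icc a (N/3), Nat.choose (2*k-a) k * Nat.choose (N-2*k) k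
    = ∑ k ∈ Finset.Icc (a+1) (N/3), Nat.choose (2*k-a-1) k * Nat.choose (N-2*k) k
      + ∑ m ∈ Finset.Icc a (N/3), Nat.choose (2*m-a-1) (m-1) * Nat.choose (N-2*m) m := by
  by_cases h : a ≤ N/3
  · rw [icc_insert a (N/3) h, Finset.sum_insert (by simp), Finset.sum_insert (by simp)]
    have hcore : ∑ k ∈ Finset.Icc (a+1) (N/3), Nat.choose (2*k-a) k * Nat.choose (N-2*k) k
        = ∑ k ∈ Finset.Icc (a+1) (N/3), Nat.choose (2*k-a-1) k * Nat.choose (N-2*k) k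
          + ∑ m ∈ Finset.Icc (a+1) (N/3), Nat.choose (2*m-a-1) (m-1) * Nat.choose (N-2*m) m := by
      rw [← Finset.sum_add_distrib]
      refine Finset.sum_congr rfl fun k hk => ?_
      rw [Finset.mem_Icc] at hk
      exact pascal_mul _ _ _ (by omega) (by omega)
    rw [hcore]
    have e1 : 2*a-a = a := by omega
    rw [e1, Nat.choose_self, Nat.choose_self]
    ring
  · rw [Finset.Icc_eq_empty (by omega), Finset.Icc_eq_empty (by omega)]
    simp

lemma lemC (A : ℕ → ℕ) (L R : ℕ) (hL : 1 ≤ L) :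
    ∑ m ∈ Finset.Icc L ((R+3)/3), A m * Nat.choose (R+3-2*m) m
    = ∑ k ∈ Finset.Icc (L-1) (R/3), A (k+1) * Nat.choose (R-2*k) k
      + ∑ m ∈ Finset.Icc L ((R+2)/3), A m * Nat.choose (R+2-2*m) m := by
  have h1 : (R+3)/3 = R/3 + 1 := by omega
  rw [h1]
  have hsplit : ∑ m ∈ Finset.Icc L (R/3+1), A m * Nat.choose (R+3-2*m) m
      = ∑ m ∈ Finset.Icc L (R/3+1), A m * Nat.choose (R+2-2*m) m
        + ∑ m ∈ Finset.Icc L (R/3+1), A m * Nat.choose (R+2-2*m) (m-1) := by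
    rw [← Finset.sum_add_distrib]
    refine Finset.sum_congr rfl fun m hm => ?_
    rw [Finset.mem_Icc] at hm
    have e : R+3-2*m = (R+2-2*m) + 1 := by omega
    rw [e]
    have := pascal_mul ((R+2-2*m)+1) m (A m) (by omega) (by omega)
    rw [Nat.add_sub_cancel] at this
    rw [mul_comm (A m), this]
    ring
  rw [hsplit, add_comm]
  congr 1
  · have e2 : Finset.Icc L (R/3+1) = (Finset.Icc (L-1) (R/3)).map (addRightEmbedding 1) := by
      rw [Finset.map_add_right_Icc]
      congr 1
      omega
    rw [e2, Finset.sum_map]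
    refine Finset.sum_congr rfl fun k hk => ?_
    rw [Finset.mem_Icc] at hk
    simp only [addRightEmbedding_apply]
    have e3 : R+2-2*(k+1) = R-2*k := by omega
    have e4 : k+1-1 = k := by omega
    rw [e3, e4]
  · apply (Finset.sum_subset ?_ ?_).symm
    · apply Finset.Icc_subset_Icc_right
      omega
    · intro m hm hm2
      rw [Finset.mem_Icc] at hm
      simp only [Finset.mem_Icc, not_and, not_le] at hm2
      have h3 : (R+2)/3 < m := hm2 hm.1
      have : R+2-2*m < m := by omega
      rw [Nat.choose_eq_zero_of_lt this, mul_zero]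

/-! ### The three recurrence identities for the closed formulas -/

lemma idI (n : ℕ) (s : ℤ) (hs : s ≤ (n:ℤ)) : Fn (n+1) s = Fn n (s-1) + Gn n s := by
  obtain ⟨N, hN⟩ : ∃ N : ℕ, (n:ℤ) - s = N := ⟨((n:ℤ)-s).toNat, by omega⟩
  unfold Fn Gn
  have eb1 : (((n+1 : ℕ) : ℤ) - s - 1).toNat = N := by push_cast; omega
  have eb2 : (((n : ℕ) : ℤ) - (s-1) - 1).toNat = N := by omega
  have eb3 : (((n : ℕ) : ℤ) - s).toNat = N := by omega
  rw [eb1, eb2, eb3]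
  rcases le_or_gt 0 s with h0 | h0
  · lift s to ℕ using h0 with c
    have L1 : (-(c:ℤ)).toNat = 0 := by omega
    rw [L1, Nat.zero_max]
    have S1 : ∑ k ∈ Finset.Icc 0 (N/3),
        Nat.choose (2 * (k:ℤ) + (c:ℤ)).toNat k * Nat.choose (N - 2*k) k
        = ∑ k ∈ Finset.Icc 0 (N/3), Nat.choose (2*k+c) k * Nat.choose (N-2*k) k := by
      refine Finset.sum_congr rfl fun k _ => ?_
      have : (2 * (k:ℤ) + (c:ℤ)).toNat = 2*k+c := by omega
      rw [this]
    have S3 : ∑ m ∈ Finset.Icc 1 (N/3),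
        Nat.choose ((c:ℤ) + 2 * (m:ℤ) - 1).toNat (m-1) * Nat.choose (N - 2*m) m
        = ∑ m ∈ Finset.Icc 1 (N/3), Nat.choose (2*m+c-1) (m-1) * Nat.choose (N-2*m) m := by
      refine Finset.sum_congr rfl fun m hm => ?_
      rw [Finset.mem_Icc] at hm
      have : ((c:ℤ) + 2 * (m:ℤ) - 1).toNat = 2*m+c-1 := by omega
      rw [this]
    rw [S1, S3]
    by_cases hc0 : c = 0
    · subst hc0
      rw [if_pos (by norm_num)]
      have L2 : (-((((0:ℕ)):ℤ) - 1)).toNat = 1 := by omega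
      rw [L2]
      have S2 : ∑ k ∈ Finset.Icc 1 (N/3),
          Nat.choose (2 * (k:ℤ) + (((0:ℕ):ℤ) - 1)).toNat k * Nat.choose (N - 2*k) k
          = ∑ k ∈ Finset.Icc 1 (N/3), Nat.choose (2*k+0-1) k * Nat.choose (N-2*k) k := by
        refine Finset.sum_congr rfl fun k hk => ?_
        rw [Finset.mem_Icc] at hk
        have : (2 * (k:ℤ) + (((0:ℕ):ℤ) - 1)).toNat = 2*k+0-1 := by omega
        rw [this]
      rw [S2]
      have hA := lemA 0 N
      have hsplit : ∑ k ∈ Finset.Icc 0 (N/3), Nat.choose (2*k+0-1) k * Nat.choose (N-2*k) k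
          = 1 + ∑ k ∈ Finset.Icc 1 (N/3), Nat.choose (2*k+0-1) k * Nat.choose (N-2*k) k := by
        rw [icc_insert 0 (N/3) (by omega), Finset.sum_insert (by simp)]
        norm_num
      omega
    · have L2 : (-(((c:ℤ))-1)).toNat = 0 := by omega
      rw [L2]
      have S2 : ∑ k ∈ Finset.Icc 0 (N/3),
          Nat.choose (2 * (k:ℤ) + ((c:ℤ)-1)).toNat k * Nat.choose (N - 2*k) k
          = ∑ k ∈ Finset.Icc 0 (N/3), Nat.choose (2*k+c-1) k * Nat.choose (N-2*k) k := by
        refine Finset.sum_congr rfl fun k _ => ?_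
        have : (2 * (k:ℤ) + ((c:ℤ)-1)).toNat = 2*k+c-1 := by omega
        rw [this]
      rw [S2, if_neg (by exact_mod_cast hc0)]
      have := lemA c N
      omega
  · obtain ⟨a, ha, rfl⟩ : ∃ a : ℕ, 1 ≤ a ∧ s = -(a:ℤ) := ⟨(-s).toNat, by omega, by omega⟩
    have L1 : (-(-(a:ℤ))).toNat = a := by omega
    have L2 : (-((-(a:ℤ))-1)).toNat = a+1 := by omega
    rw [L1, L2, max_eq_left ha, if_neg (by omega)]
    have S1 : ∑ k ∈ Finset.Icc a (N/3),
        Nat.choose (2 * (k:ℤ) + (-(a:ℤ))).toNat k * Nat.choose (N - 2*k) k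
        = ∑ k ∈ Finset.Icc a (N/3), Nat.choose (2*k-a) k * Nat.choose (N-2*k) k := by
      refine Finset.sum_congr rfl fun k hk => ?_
      rw [Finset.mem_Icc] at hk
      have : (2 * (k:ℤ) + (-(a:ℤ))).toNat = 2*k-a := by omega
      rw [this]
    have S2 : ∑ k ∈ Finset.Icc (a+1) (N/3),
        Nat.choose (2 * (k:ℤ) + ((-(a:ℤ))-1)).toNat k * Nat.choose (N - 2*k) k
        = ∑ k ∈ Finset.Icc (a+1) (N/3), Nat.choose (2*k-a-1) k * Nat.choose (N-2*k) k := by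
      refine Finset.sum_congr rfl fun k hk => ?_
      rw [Finset.mem_Icc] at hk
      have : (2 * (k:ℤ) + ((-(a:ℤ))-1)).toNat = 2*k-a-1 := by omega
      rw [this]
    have S3 : ∑ m ∈ Finset.Icc a (N/3),
        Nat.choose ((-(a:ℤ)) + 2 * (m:ℤ) - 1).toNat (m-1) * Nat.choose (N - 2*m) m
        = ∑ m ∈ Finset.Icc a (N/3), Nat.choose (2*m-a-1) (m-1) * Nat.choose (N-2*m) m := by
      refine Finset.sum_congr rfl fun m hm => ?_
      rw [Finset.mem_Icc] at hm
      have : ((-(a:ℤ)) + 2 * (m:ℤ) - 1).toNat = 2*m-a-1 := by omega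
      rw [this]
    rw [S1, S2, S3]
    have := lemB a N ha
    omega

lemma idII (n : ℕ) (s : ℤ) (hs : s ≤ (n:ℤ) - 2) : Gn (n+1) s = Fn n (s+1) + Gn n s := by
  obtain ⟨R, hR⟩ : ∃ R : ℕ, (n:ℤ) - s - 2 = R := ⟨((n:ℤ)-s-2).toNat, by omega⟩
  unfold Fn Gn
  have eb1 : ((((n+1:ℕ)) : ℤ) - s).toNat = R+3 := by push_cast; omega
  have eb2 : (((n:ℕ):ℤ) - (s+1) - 1).toNat = R := by omega
  have eb3 : (((n:ℕ):ℤ) - s).toNat = R+2 := by omega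
  rw [eb1, eb2, eb3]
  have eL : (-(s+1)).toNat = (max (-s).toNat 1) - 1 := by omega
  rw [eL]
  have hL : 1 ≤ max (-s).toNat 1 := le_max_right _ _
  have hC := lemC (fun m => Nat.choose (s + 2*(m:ℤ) - 1).toNat (m-1)) (max (-s).toNat 1) R hL
  rw [hC]
  have SF : ∑ k ∈ Finset.Icc ((max (-s).toNat 1) - 1) (R/3),
      Nat.choose (s + 2*((k+1:ℕ):ℤ) - 1).toNat ((k+1)-1) * Nat.choose (R-2*k) k
      = ∑ k ∈ Finset.Icc ((max (-s).toNat 1) - 1) (R/3),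
      Nat.choose (2*(k:ℤ) + (s+1)).toNat k * Nat.choose (R-2*k) k := by
    refine Finset.sum_congr rfl fun k _ => ?_
    have e1 : (s + 2*((k+1:ℕ):ℤ) - 1).toNat = (2*(k:ℤ) + (s+1)).toNat := by push_cast; omega
    have e2 : (k+1)-1 = k := by omega
    rw [e1, e2]
  rw [SF]
  omega

lemma idIII (n : ℕ) (s : ℤ) (hn : 1 ≤ n) (hs : (n:ℤ) - 1 ≤ s) : Gn (n+1) s = Gn n s := by
  unfold Gn
  rw [Finset.Icc_eq_empty (by push_cast; omega), Finset.Icc_eq_empty (by omega)]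
  simp

/-! ### Main induction -/

lemma main_formula (n : ℕ) (hn : 1 ≤ n) :
    (∀ s : ℤ, s ≤ (n:ℤ) - 1 → Hcnt n s = Fn n s) ∧ (∀ s : ℤ, Tcnt n s = Gn n s) := by
  induction n, hn using Nat.le_induction with
  | base =>
    constructor
    · intro s hs
      rw [Hcnt_one]
      unfold Fn
      split_ifs with h
      · subst h
        rw [show (((1:ℕ):ℤ) - 0 - 1).toNat = 0 by norm_num,
            show ((-(0:ℤ)).toNat) = 0 by norm_num]
        simp
      · rw [Finset.Icc_eq_empty (by push_cast; omega), Finset.sum_empty]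
    · intro s
      rw [Tcnt_one]
      unfold Gn
      split_ifs with h
      · subst h
        rw [Finset.Icc_eq_empty (by norm_num)]
        simp
      · rw [Finset.Icc_eq_empty (by push_cast; omega)]
        simp [h]
  | succ n hn ih =>
    obtain ⟨m, rfl⟩ : ∃ m, n = m+1 := ⟨n-1, by omega⟩
    have e21 : m+1+1 = m+2 := rfl
    constructor
    · intro s hs
      rw [e21, Hcnt_succ m s]
      rw [ih.1 (s-1) (by push_cast at hs ⊢; omega), ih.2 s]
      exact (idI (m+1) s (by push_cast at hs ⊢; omega)).symm
    · intro s
      rw [e21, Tcnt_succ m s, ih.2 s]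
      by_cases hc : s ≤ (m:ℤ) - 1
      · rw [ih.1 (s+1) (by push_cast; omega)]
        exact (idII (m+1) s (by push_cast; omega)).symm
      · rw [Hcnt_zero m (s+1) (by omega), zero_add]
        exact (idIII (m+1) s (by omega) (by push_cast; omega)).symm

/-- Theorem 2, formula (4.1): for `n ≥ 1` and integer `s` with
`−⌊(n−1)/2⌋ ≤ s ≤ n−1`,
`H_s(n) = ∑_{k = max(0,−s)}^{⌊(n−s−1)/3⌋} C(2k+s, k) · C(n−s−1−2k, k)`. -/
theorem H_formula (n : ℕ) (hn : 1 ≤ n) (s : ℤ)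
    (hs1 : -(((n - 1) / 2 : ℕ) : ℤ) ≤ s) (hs2 : s ≤ (n : ℤ) - 1) :
    Hcnt n s = ∑ k ∈ Finset.Icc ((-s).toNat) (((n : ℤ) - s - 1).toNat / 3),
      Nat.choose (2 * (k : ℤ) + s).toNat k *
        Nat.choose (((n : ℤ) - s - 1).toNat - 2 * k) k := by
  have h := (main_formula n hn).1 s hs2
  rw [h]
  rfl
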